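/- Dual Cauchy–Schwarz-type matrix inequality: let (a_{ij}) be complex numbers (finitely supported) and (b_j) complex with Σ_j |b_j|² ≤ 1. Then Σ_i |Σ_j a_{ij} b_j|² ≤ C·[ max_i Σ_j |a_{ij}|² + ( Σ_{i≠i'} |Σ_j a_{i'j} \overline{a_{ij}}|² )^{1/2} ]. -/

import Mathlib

open Finset

/-- Cauchy–Schwarz for finite sums of complex numbers, norm form. -/
lemma cs_complex_aux {ι : Type*} (s : Finset ι) (f g : ι → ℂ) :
    ‖∑ j ∈ s, f j * g j‖ ≤
      Real.sqrt (∑ j ∈ s, ‖f j‖ ^ 2) * Real.sqrt (∑ j ∈ s, ‖g j‖ ^ 2) := by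
  calc ‖∑ j ∈ s, f j * g j‖ ≤ ∑ j ∈ s, ‖f j‖ * ‖g j‖ := by
        refine (norm_sum_le _ _).trans_eq ?_
        simp [norm_mul]
    _ ≤ _ := Real.sum_mul_le_sqrt_mul_sqrt s _ _

lemma re_le_norm' (z : ℂ) : z.re ≤ ‖z‖ := by
  calc z.re ≤ |z.re| := le_abs_self _
    _ ≤ ‖z‖ := Complex.abs_re_le_norm _
    _ = ‖z‖ := rfl

/-- Dual Cauchy–Schwarz type matrix inequality: there is a universal constant `C` so that
for finite index sets `I, J`, a matrix `a : I → J → ℂ` and a vector `b : J → ℂ` with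
`∑ j ‖b j‖² ≤ 1`, one has
`∑ i ‖∑ j a i j b j‖² ≤ C (max_i ∑ j ‖a i j‖² + (∑_{i ≠ i'} ‖∑ j a i' j conj (a i j)‖²)^{1/2})`. -/
theorem matrix_cauchy_schwarz_dual :
    ∃ C : ℝ, 0 < C ∧ ∀ (I J : Type) [Fintype I] [DecidableEq I] [Fintype J]
      (a : I → J → ℂ) (b : J → ℂ),
      (∑ j, ‖b j‖ ^ 2) ≤ 1 →
      (∑ i, ‖∑ j, a i j * b j‖ ^ 2) ≤
        C * ((⨆ i, ∑ j, ‖a i j‖ ^ 2) +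
          Real.sqrt (∑ i, ∑ i', if i ≠ i' then
            ‖∑ j, a i' j * (starRingEnd ℂ) (a i j)‖ ^ 2 else 0)) := by
  refine ⟨1, one_pos, ?_⟩
  intro I J _ _ _ a b hb
  classical
  set c : I → ℂ := fun i => ∑ j, a i j * b j with hc
  set S : ℝ := ∑ i, ‖c i‖ ^ 2 with hS
  set M : ℝ := ⨆ i, ∑ j, ‖a i j‖ ^ 2 with hM
  set G : I → I → ℂ := fun i i' => ∑ j, a i' j * (starRingEnd ℂ) (a i j) with hG
  set T : ℝ := Real.sqrt (∑ i, ∑ i', if i ≠ i' then ‖G i i'‖ ^ 2 else 0) with hT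
  have hS0 : 0 ≤ S := Finset.sum_nonneg fun i _ => by positivity
  have hM0 : 0 ≤ M := Real.iSup_nonneg fun i => Finset.sum_nonneg fun j _ => by positivity
  have hT0 : 0 ≤ T := Real.sqrt_nonneg _
  have hMi : ∀ i : I, (∑ j, ‖a i j‖ ^ 2) ≤ M := fun i =>
    le_ciSup (f := fun i : I => ∑ j, ‖a i j‖ ^ 2) (Set.Finite.bddAbove (Set.finite_range _)) i
  -- d j = ∑ i conj (c i) * a i j
  set d : J → ℂ := fun j => ∑ i, (starRingEnd ℂ) (c i) * a i j with hd
  -- Step 1 : S ≤ sqrt (∑ j ‖d j‖²)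
  have hbd : ∑ j, b j * d j = (S : ℂ) := by
    have : ∑ j, b j * d j = ∑ i, (starRingEnd ℂ) (c i) * c i := by
      simp only [hd, Finset.mul_sum]
      rw [Finset.sum_comm]
      refine Finset.sum_congr rfl fun i _ => ?_
      rw [hc, Finset.mul_sum]
      refine Finset.sum_congr rfl fun j _ => by ring
    rw [this, hS]
    push_cast
    refine Finset.sum_congr rfl fun i _ => ?_
    rw [RCLike.conj_mul]
    norm_num
  have step1 : S ≤ Real.sqrt (∑ j, ‖d j‖ ^ 2) := by
    have h1 : S = ‖∑ j, b j * d j‖ := by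
      rw [hbd, Complex.norm_real, Real.norm_of_nonneg hS0]
    have h2 := cs_complex_aux Finset.univ b d
    have h3 : Real.sqrt (∑ j, ‖b j‖ ^ 2) ≤ 1 := by
      rw [show (1 : ℝ) = Real.sqrt 1 by simp]
      exact Real.sqrt_le_sqrt hb
    calc S = ‖∑ j, b j * d j‖ := h1
      _ ≤ Real.sqrt (∑ j, ‖b j‖ ^ 2) * Real.sqrt (∑ j, ‖d j‖ ^ 2) := h2
      _ ≤ 1 * Real.sqrt (∑ j, ‖d j‖ ^ 2) := by
          exact mul_le_mul_of_nonneg_right h3 (Real.sqrt_nonneg _)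
      _ = _ := one_mul _
  -- Step 2 : ∑ j ‖d j‖² ≤ ∑ i ∑ i' ‖c i‖ ‖c i'‖ ‖G i i'‖
  have step2 : (∑ j, ‖d j‖ ^ 2) ≤ ∑ i, ∑ i', ‖c i‖ * ‖c i'‖ * ‖G i i'‖ := by
    have hre : (∑ j, ‖d j‖ ^ 2) = (∑ j, (starRingEnd ℂ) (d j) * d j).re := by
      rw [Complex.re_sum]
      refine Finset.sum_congr rfl fun j _ => ?_
      rw [RCLike.conj_mul]
      norm_num
      rw [← Complex.ofReal_pow, Complex.ofReal_re]
    have hexp : ∑ j, (starRingEnd ℂ) (d j) * d j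
        = ∑ i, ∑ i', (starRingEnd ℂ) (c i) * c i' * G i' i := by
      simp only [hd, map_sum, map_mul, Finset.sum_mul, Finset.mul_sum, RingHomCompTriple.comp_apply,
        RingHom.id_apply, Complex.conj_conj]
      rw [Finset.sum_comm]
      refine Finset.sum_congr rfl fun i _ => ?_
      rw [Finset.sum_comm]
      refine Finset.sum_congr rfl fun i' _ => ?_
      rw [hG, Finset.mul_sum]
      refine Finset.sum_congr rfl fun j _ => by ring
    rw [hre, hexp]
    calc (∑ i, ∑ i', (starRingEnd ℂ) (c i) * c i' * G i' i).re
        ≤ ‖∑ i, ∑ i', (starRingEnd ℂ) (c i) * c i' * G i' i‖ := re_le_norm' _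
      _ ≤ ∑ i, ∑ i', ‖(starRingEnd ℂ) (c i) * c i' * G i' i‖ := by
          refine (norm_sum_le _ _).trans ?_
          exact Finset.sum_le_sum fun i _ => norm_sum_le _ _
      _ = ∑ i, ∑ i', ‖c i‖ * ‖c i'‖ * ‖G i' i‖ := by
          refine Finset.sum_congr rfl fun i _ => Finset.sum_congr rfl fun i' _ => ?_
          simp [norm_mul]
      _ = ∑ i, ∑ i', ‖c i‖ * ‖c i'‖ * ‖G i i'‖ := by
          rw [Finset.sum_comm]
          exact Finset.sum_congr rfl fun i _ => Finset.sum_congr rfl fun i' _ => by ring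
  -- Step 3: split into diagonal and off-diagonal
  have hGdiag : ∀ i : I, ‖G i i‖ = ∑ j, ‖a i j‖ ^ 2 := by
    intro i
    have : G i i = ((∑ j, ‖a i j‖ ^ 2 : ℝ) : ℂ) := by
      rw [hG]
      push_cast
      refine Finset.sum_congr rfl fun j _ => ?_
      rw [Complex.mul_conj']
    rw [this, Complex.norm_real,
      Real.norm_of_nonneg (Finset.sum_nonneg fun j _ => by positivity)]
  have split : (∑ i, ∑ i', ‖c i‖ * ‖c i'‖ * ‖G i i'‖)
      = (∑ i, ‖c i‖ ^ 2 * (∑ j, ‖a i j‖ ^ 2))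
        + ∑ i, ∑ i', (if i ≠ i' then ‖c i‖ * ‖c i'‖ * ‖G i i'‖ else 0) := by
    have : ∀ i i' : I, ‖c i‖ * ‖c i'‖ * ‖G i i'‖
        = (if i = i' then ‖c i‖ * ‖c i'‖ * ‖G i i'‖ else 0)
          + (if i ≠ i' then ‖c i‖ * ‖c i'‖ * ‖G i i'‖ else 0) := by
      intro i i'
      rcases eq_or_ne i i' with h | h
      · rw [if_pos h, if_neg (fun hn => hn h), add_zero]
      · rw [if_neg h, if_pos h, zero_add]
    have h1 : (∑ i, ∑ i', ‖c i‖ * ‖c i'‖ * ‖G i i'‖)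
        = ∑ i, ∑ i', ((if i = i' then ‖c i‖ * ‖c i'‖ * ‖G i i'‖ else 0)
            + (if i ≠ i' then ‖c i‖ * ‖c i'‖ * ‖G i i'‖ else 0)) :=
      Finset.sum_congr rfl fun i _ => Finset.sum_congr rfl fun i' _ => this i i'
    rw [h1]
    simp_rw [Finset.sum_add_distrib]
    congr 1
    refine Finset.sum_congr rfl fun i _ => ?_
    rw [Finset.sum_ite_eq Finset.univ i
      (fun i' => ‖c i‖ * ‖c i'‖ * ‖G i i'‖)]
    simp [hGdiag i, sq]
  -- diagonal bound
  have diag : (∑ i, ‖c i‖ ^ 2 * (∑ j, ‖a i j‖ ^ 2)) ≤ S * M := by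
    calc (∑ i, ‖c i‖ ^ 2 * (∑ j, ‖a i j‖ ^ 2)) ≤ ∑ i, ‖c i‖ ^ 2 * M :=
          Finset.sum_le_sum fun i _ => mul_le_mul_of_nonneg_left (hMi i) (by positivity)
      _ = S * M := by rw [hS, Finset.sum_mul]
  -- off-diagonal bound via Cauchy-Schwarz on I × I
  have offd : (∑ i, ∑ i', (if i ≠ i' then ‖c i‖ * ‖c i'‖ * ‖G i i'‖ else 0)) ≤ S * T := by
    have key := Real.sum_mul_le_sqrt_mul_sqrt (Finset.univ (α := I × I))
      (fun p => if p.1 ≠ p.2 then ‖c p.1‖ * ‖c p.2‖ else 0)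
      (fun p => if p.1 ≠ p.2 then ‖G p.1 p.2‖ else 0)
    have e1 : (∑ p : I × I, (if p.1 ≠ p.2 then ‖c p.1‖ * ‖c p.2‖ else 0)
          * (if p.1 ≠ p.2 then ‖G p.1 p.2‖ else 0))
        = ∑ i, ∑ i', (if i ≠ i' then ‖c i‖ * ‖c i'‖ * ‖G i i'‖ else 0) := by
      rw [Fintype.sum_prod_type]
      refine Finset.sum_congr rfl fun i _ => Finset.sum_congr rfl fun i' _ => ?_
      by_cases h : i = i' <;> simp [h]
    have e2 : Real.sqrt (∑ p : I × I, (if p.1 ≠ p.2 then ‖c p.1‖ * ‖c p.2‖ else 0) ^ 2) ≤ S := by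
      rw [show S = Real.sqrt (S ^ 2) by rw [Real.sqrt_sq hS0]]
      refine Real.sqrt_le_sqrt ?_
      have : S ^ 2 = ∑ p : I × I, ‖c p.1‖ ^ 2 * ‖c p.2‖ ^ 2 := by
        rw [hS, sq, Finset.sum_mul_sum, Fintype.sum_prod_type]
      rw [this]
      refine Finset.sum_le_sum fun p _ => ?_
      by_cases h : p.1 = p.2 <;> simp [h, mul_pow] <;> positivity
    have e3 : Real.sqrt (∑ p : I × I, (if p.1 ≠ p.2 then ‖G p.1 p.2‖ else 0) ^ 2) = T := by
      rw [hT]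
      congr 1
      rw [Fintype.sum_prod_type]
      refine Finset.sum_congr rfl fun i _ => Finset.sum_congr rfl fun i' _ => ?_
      by_cases h : i = i' <;> simp [h]
    calc (∑ i, ∑ i', (if i ≠ i' then ‖c i‖ * ‖c i'‖ * ‖G i i'‖ else 0)) = _ := e1.symm
      _ ≤ _ := key
      _ ≤ S * T := by
          rw [← e3]
          exact mul_le_mul e2 le_rfl (Real.sqrt_nonneg _) hS0
  -- combine
  have step23 : (∑ j, ‖d j‖ ^ 2) ≤ S * (M + T) := by
    calc (∑ j, ‖d j‖ ^ 2) ≤ ∑ i, ∑ i', ‖c i‖ * ‖c i'‖ * ‖G i i'‖ := step2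
      _ = _ := split
      _ ≤ S * M + S * T := add_le_add diag offd
      _ = S * (M + T) := by ring
  have sq_le : S ^ 2 ≤ S * (M + T) := by
    have := step1.trans (Real.sqrt_le_sqrt step23)
    calc S ^ 2 = S * S := sq S
      _ ≤ Real.sqrt (S * (M + T)) * Real.sqrt (S * (M + T)) :=
          mul_le_mul this this hS0 (Real.sqrt_nonneg _)
      _ = S * (M + T) := Real.mul_self_sqrt (mul_nonneg hS0 (by positivity))
  have final : S ≤ M + T := by
    rcases eq_or_lt_of_le hS0 with h | h
    · rw [← h]; positivity
    · have := sq_le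
      rw [sq] at this
      exact le_of_mul_le_mul_left this h
  calc S ≤ M + T := final
    _ = 1 * (M + T) := (one_mul _).symm
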